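/- arXiv:2007.12456 — 2 statements merged into one kernel-verified Lean document; each statement's English description precedes it below -/
import Mathlib

section
/- Let H be a real Hilbert space and E : H → [0,∞] a symmetric, convex, lower semicontinuous functional. Then the energy space 𝔇 equipped with ‖·‖_𝔇 is complete: every sequence (xₙ) in 𝔇 that is Cauchy with respect to ‖·‖_𝔇 converges in the norm ‖·‖_𝔇 to some element x ∈ 𝔇. -/
open scoped ENNReal

noncomputable section

variable {H : Type*} [NormedAddCommGroup H] [InnerProductSpace ℝ H] [CompleteSpace H]

/-- Convexity for an `ℝ≥0∞`-valued functional on a real Hilbert space. -/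
def IsConvexFunctional (E : H → ℝ≥0∞) : Prop :=
  ∀ x y : H, ∀ a b : ℝ, 0 ≤ a → 0 ≤ b → a + b = 1 →
    E (a • x + b • y) ≤ ENNReal.ofReal a * E x + ENNReal.ofReal b * E y

/-- `E` is symmetric: `E 0 = 0` and `E (-x) = E x`. -/
def IsSymmetricFunctional (E : H → ℝ≥0∞) : Prop :=
  E 0 = 0 ∧ ∀ x : H, E (-x) = E x

/-- `E₁ x = ‖x‖² + E x`. -/
def EOne (E : H → ℝ≥0∞) (x : H) : ℝ≥0∞ :=
  ENNReal.ofReal (‖x‖ ^ 2) + E x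

/-- The Luxemburg-type norm `‖x‖_𝔇 = inf {λ > 0 | E₁(x/λ) ≤ 1}`, with `inf ∅ = ∞`. -/
def Dnorm (E : H → ℝ≥0∞) (x : H) : ℝ≥0∞ :=
  sInf (ENNReal.ofReal '' {l : ℝ | 0 < l ∧ EOne E (l⁻¹ • x) ≤ 1})

/-- The energy space `𝔇 = {x ∈ H | ‖x‖_𝔇 < ∞}`. -/
def Dspace (E : H → ℝ≥0∞) : Set H :=
  {x : H | Dnorm E x < ⊤}

lemma EOne_zero (E : H → ℝ≥0∞) (h0 : E 0 = 0) : EOne E 0 = 0 := by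
  simp [EOne, h0]

lemma EOne_convex (E : H → ℝ≥0∞) (hconv : IsConvexFunctional E)
    (u v : H) (a b : ℝ) (ha : 0 ≤ a) (hb : 0 ≤ b) (hab : a + b = 1) :
    EOne E (a • u + b • v) ≤ ENNReal.ofReal a * EOne E u + ENNReal.ofReal b * EOne E v := by
  have hnorm : ‖a • u + b • v‖ ^ 2 ≤ a * ‖u‖ ^ 2 + b * ‖v‖ ^ 2 := by
    have h1 : ‖a • u + b • v‖ ≤ a * ‖u‖ + b * ‖v‖ := by
      calc ‖a • u + b • v‖ ≤ ‖a • u‖ + ‖b • v‖ := norm_add_le _ _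
        _ = a * ‖u‖ + b * ‖v‖ := by
            rw [norm_smul, norm_smul, Real.norm_of_nonneg ha, Real.norm_of_nonneg hb]
    have h2 : ‖a • u + b • v‖ ^ 2 ≤ (a * ‖u‖ + b * ‖v‖) ^ 2 :=
      pow_le_pow_left₀ (norm_nonneg _) h1 2
    nlinarith [sq_nonneg (‖u‖ - ‖v‖), mul_nonneg ha hb, norm_nonneg u, norm_nonneg v]
  have hE := hconv u v a b ha hb hab
  unfold EOne
  calc ENNReal.ofReal (‖a • u + b • v‖ ^ 2) + E (a • u + b • v)
      ≤ ENNReal.ofReal (a * ‖u‖ ^ 2 + b * ‖v‖ ^ 2)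
        + (ENNReal.ofReal a * E u + ENNReal.ofReal b * E v) :=
        add_le_add (ENNReal.ofReal_le_ofReal hnorm) hE
    _ = ENNReal.ofReal a * (ENNReal.ofReal (‖u‖ ^ 2) + E u)
        + ENNReal.ofReal b * (ENNReal.ofReal (‖v‖ ^ 2) + E v) := by
        rw [ENNReal.ofReal_add (by positivity) (by positivity),
          ENNReal.ofReal_mul ha, ENNReal.ofReal_mul hb]
        ring

lemma adm_mono (E : H → ℝ≥0∞) (hconv : IsConvexFunctional E) (h0 : E 0 = 0) (z : H)
    {l l' : ℝ} (hl : 0 < l) (hll' : l ≤ l') (h : EOne E (l⁻¹ • z) ≤ 1) :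
    EOne E (l'⁻¹ • z) ≤ 1 := by
  have hl' : 0 < l' := lt_of_lt_of_le hl hll'
  have hc0 : 0 < l / l' := div_pos hl hl'
  have hc1 : l / l' ≤ 1 := (div_le_one hl').mpr hll'
  have key : l'⁻¹ • z = (l / l') • (l⁻¹ • z) + (1 - l / l') • (0 : H) := by
    rw [smul_zero, add_zero, smul_smul]
    congr 1
    field_simp
  rw [key]
  calc EOne E _ ≤ ENNReal.ofReal (l / l') * EOne E (l⁻¹ • z)
        + ENNReal.ofReal (1 - l / l') * EOne E 0 :=
      EOne_convex E hconv _ _ _ _ hc0.le (by linarith) (by ring)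
    _ ≤ ENNReal.ofReal (l / l') * 1 + ENNReal.ofReal (1 - l / l') * 0 := by
        rw [EOne_zero E h0]
        gcongr
    _ ≤ 1 := by
        rw [mul_one, mul_zero, add_zero]
        exact ENNReal.ofReal_le_one.mpr hc1

lemma adm_add (E : H → ℝ≥0∞) (hconv : IsConvexFunctional E) {u v : H} {a b : ℝ}
    (ha : 0 < a) (hb : 0 < b) (hu : EOne E (a⁻¹ • u) ≤ 1) (hv : EOne E (b⁻¹ • v) ≤ 1) :
    EOne E ((a + b)⁻¹ • (u + v)) ≤ 1 := by
  have hab : 0 < a + b := by linarith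
  have key : (a + b)⁻¹ • (u + v) = (a / (a + b)) • (a⁻¹ • u) + (b / (a + b)) • (b⁻¹ • v) := by
    rw [smul_smul, smul_smul, smul_add]
    congr 2 <;> field_simp
  rw [key]
  calc EOne E _ ≤ ENNReal.ofReal (a / (a + b)) * EOne E (a⁻¹ • u)
        + ENNReal.ofReal (b / (a + b)) * EOne E (b⁻¹ • v) :=
      EOne_convex E hconv _ _ _ _ (by positivity) (by positivity) (by field_simp)
    _ ≤ ENNReal.ofReal (a / (a + b)) * 1 + ENNReal.ofReal (b / (a + b)) * 1 := by gcongr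
    _ = ENNReal.ofReal (a / (a + b) + b / (a + b)) := by
        rw [mul_one, mul_one, ENNReal.ofReal_add (by positivity) (by positivity)]
    _ = 1 := by rw [← add_div, div_self hab.ne']; simp

lemma Dnorm_le (E : H → ℝ≥0∞) {z : H} {l : ℝ} (hl : 0 < l) (h : EOne E (l⁻¹ • z) ≤ 1) :
    Dnorm E z ≤ ENNReal.ofReal l :=
  sInf_le ⟨l, ⟨hl, h⟩, rfl⟩

lemma adm_of_lt (E : H → ℝ≥0∞) (hconv : IsConvexFunctional E) (h0 : E 0 = 0) {z : H} {l : ℝ}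
    (hl : 0 < l) (h : Dnorm E z < ENNReal.ofReal l) : EOne E (l⁻¹ • z) ≤ 1 := by
  obtain ⟨e, ⟨l', ⟨hl', hadm⟩, rfl⟩, hlt⟩ := sInf_lt_iff.mp h
  exact adm_mono E hconv h0 z hl' ((ENNReal.ofReal_lt_ofReal_iff hl).mp hlt).le hadm

lemma norm_le_of_adm (E : H → ℝ≥0∞) {z : H} {l : ℝ} (hl : 0 < l)
    (h : EOne E (l⁻¹ • z) ≤ 1) : ‖z‖ ≤ l := by
  have h1 : ENNReal.ofReal (‖l⁻¹ • z‖ ^ 2) ≤ 1 := le_trans (le_add_right le_rfl) h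
  have h2 : ‖l⁻¹ • z‖ ^ 2 ≤ 1 := by
    by_contra hc
    push_neg at hc
    exact absurd h1 (not_le.mpr (ENNReal.one_lt_ofReal.mpr hc))
  have h3 : ‖l⁻¹ • z‖ ≤ 1 := by nlinarith [norm_nonneg (l⁻¹ • z)]
  rw [norm_smul, norm_inv, Real.norm_of_nonneg hl.le] at h3
  rw [inv_mul_le_iff₀ hl, mul_one] at h3
  exact h3

lemma EOne_le_of_tendsto (E : H → ℝ≥0∞) (hlsc : LowerSemicontinuous E) {z : ℕ → H} {w : H}
    (hz : Filter.Tendsto z Filter.atTop (nhds w))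
    (h : ∀ᶠ k in Filter.atTop, EOne E (z k) ≤ 1) : EOne E w ≤ 1 := by
  have hlsc1 : LowerSemicontinuous (EOne E) := by
    have hc : Continuous (fun u : H => ENNReal.ofReal (‖u‖ ^ 2)) :=
      ENNReal.continuous_ofReal.comp ((continuous_norm).pow 2)
    exact hc.lowerSemicontinuous.add hlsc
  by_contra hgt
  push_neg at hgt
  have hev : ∀ᶠ u in nhds w, 1 < EOne E u := hlsc1 w 1 hgt
  have := (hz.eventually hev).and h
  obtain ⟨k, hk1, hk2⟩ := this.exists
  exact absurd hk2 (not_le.mpr hk1)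

/-- `(𝔇, ‖·‖_𝔇)` is complete: every `‖·‖_𝔇`-Cauchy sequence in `𝔇` converges in `‖·‖_𝔇`
to an element of `𝔇`. -/
theorem Dspace_complete (E : H → ℝ≥0∞) (hconv : IsConvexFunctional E)
    (hlsc : LowerSemicontinuous E) (hsym : IsSymmetricFunctional E)
    (x : ℕ → H) (hx : ∀ n, x n ∈ Dspace E)
    (hcauchy : ∀ ε : ℝ≥0∞, 0 < ε → ∃ N : ℕ, ∀ n ≥ N, ∀ k ≥ N, Dnorm E (x n - x k) < ε) :
    ∃ y ∈ Dspace E, Filter.Tendsto (fun n => Dnorm E (x n - y)) Filter.atTop (nhds 0) := by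
  obtain ⟨h0, hneg⟩ := hsym
  -- Cauchy in H
  have hCau : CauchySeq x := by
    rw [Metric.cauchySeq_iff]
    intro ε hε
    obtain ⟨N, hN⟩ := hcauchy (ENNReal.ofReal (ε / 2)) (ENNReal.ofReal_pos.mpr (by linarith))
    refine ⟨N, fun m hm n hn => ?_⟩
    have hadm := adm_of_lt E hconv h0 (by linarith : (0:ℝ) < ε / 2) (hN m hm n hn)
    have := norm_le_of_adm E (by linarith : (0:ℝ) < ε / 2) hadm
    rw [dist_eq_norm]
    linarith
  obtain ⟨y, hy⟩ := cauchySeq_tendsto_of_complete hCau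
  -- key estimate
  have key : ∀ δ : ℝ, 0 < δ → ∀ n : ℕ,
      (∀ k ≥ n, Dnorm E (x n - x k) < ENNReal.ofReal δ) →
      Dnorm E (x n - y) ≤ ENNReal.ofReal δ := by
    intro δ hδ n hev
    refine Dnorm_le E hδ ?_
    refine EOne_le_of_tendsto E hlsc (z := fun k => δ⁻¹ • (x n - x k))
      (w := δ⁻¹ • (x n - y)) ?_ ?_
    · exact (hy.const_sub (x n)).const_smul δ⁻¹
    · filter_upwards [Filter.eventually_ge_atTop n] with k hk
      exact adm_of_lt E hconv h0 hδ (hev k hk)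
  -- convergence of Dnorm
  have htend : Filter.Tendsto (fun n => Dnorm E (x n - y)) Filter.atTop (nhds 0) := by
    rw [ENNReal.tendsto_nhds_zero]
    intro ε hε
    have hmin : min ε 1 ≠ ⊤ := ne_top_of_le_ne_top ENNReal.one_ne_top (min_le_right _ _)
    set δ := (min ε 1).toReal with hδdef
    have hδpos : 0 < δ := ENNReal.toReal_pos (lt_min hε one_pos).ne' hmin
    have hδle : ENNReal.ofReal δ ≤ ε := by
      rw [hδdef, ENNReal.ofReal_toReal hmin]
      exact min_le_left _ _
    obtain ⟨N, hN⟩ := hcauchy (ENNReal.ofReal δ) (ENNReal.ofReal_pos.mpr hδpos)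
    filter_upwards [Filter.eventually_ge_atTop N] with n hn
    refine le_trans (key δ hδpos n (fun k hk => ?_)) hδle
    exact hN n hn k (le_trans hn hk)
  -- membership in Dspace
  have hmem : y ∈ Dspace E := by
    obtain ⟨N, hN⟩ := hcauchy 1 one_pos
    have h1 : Dnorm E (x N - y) ≤ ENNReal.ofReal 1 := by
      refine key 1 one_pos N (fun k hk => ?_)
      rw [ENNReal.ofReal_one]
      exact hN N le_rfl k hk
    have hsymEOne : ∀ u : H, EOne E (-u) = EOne E u := fun u => by simp [EOne, hneg u]
    have hfin := hx N
    set a := (Dnorm E (x N) + 1).toReal with hadef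
    have hane : Dnorm E (x N) + 1 ≠ ⊤ := ENNReal.add_ne_top.mpr ⟨hfin.ne, ENNReal.one_ne_top⟩
    have hapos : 0 < a := ENNReal.toReal_pos (by simp) hane
    have hlt : Dnorm E (x N) < ENNReal.ofReal a := by
      rw [hadef, ENNReal.ofReal_toReal hane]
      exact ENNReal.lt_add_right hfin.ne one_ne_zero
    have haadm : EOne E (a⁻¹ • x N) ≤ 1 := adm_of_lt E hconv h0 hapos hlt
    have hb : EOne E ((2:ℝ)⁻¹ • (y - x N)) ≤ 1 := by
      have h2 : EOne E ((2:ℝ)⁻¹ • (x N - y)) ≤ 1 := by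
        refine adm_of_lt E hconv h0 two_pos (lt_of_le_of_lt h1 ?_)
        exact (ENNReal.ofReal_lt_ofReal_iff (by norm_num)).mpr one_lt_two
      calc EOne E ((2:ℝ)⁻¹ • (y - x N))
          = EOne E (-((2:ℝ)⁻¹ • (x N - y))) := by rw [← smul_neg, neg_sub]
        _ = EOne E ((2:ℝ)⁻¹ • (x N - y)) := hsymEOne _
        _ ≤ 1 := h2
    have hadd := adm_add E hconv hapos two_pos haadm hb
    have hxy : x N + (y - x N) = y := by abel
    rw [hxy] at hadd
    exact lt_of_le_of_lt (Dnorm_le E (by positivity) hadd) ENNReal.ofReal_lt_top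
  exact ⟨y, hmem, htend⟩

end
end

section
/- Let H be a real Hilbert space and E : H → [0,∞] a convex, lower semicontinuous functional with E(0) = 0. Then the linear span of dom(E) equals the linear span of dom(sym E); moreover, every f ∈ dom(sym E) can be written as f = u − v with u, v ∈ dom(E). -/
open scoped ENNReal

noncomputable section

variable {H : Type*} [NormedAddCommGroup H] [InnerProductSpace ℝ H] [CompleteSpace H]

/-- The symmetric closure `sym E` of `E`: the supremum of all lower semicontinuous convex
functionals `F` with `F ≤ E₁(·)` and `F ≤ E₁(-·)`. -/
def symE (E : H → ℝ≥0∞) (u : H) : ℝ≥0∞ :=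
  sSup {t : ℝ≥0∞ | ∃ F : H → ℝ≥0∞, LowerSemicontinuous F ∧ IsConvexFunctional F ∧
    (∀ x : H, F x ≤ EOne E x) ∧ (∀ x : H, F x ≤ EOne E (-x)) ∧ t = F u}

/-! ### Auxiliary material -/

namespace SpanDomSymEAux

open NormedSpace Pointwise
open scoped RealInnerProductSpace

/-- The canonical map from a Hilbert space to its weak-star dual. -/
def phi (x : H) : WeakDual ℝ H := StrongDual.toWeakDual (InnerProductSpace.toDual ℝ H x)

lemma phi_injective : Function.Injective (phi (H := H)) :=
  StrongDual.toWeakDual.injective.comp (InnerProductSpace.toDual ℝ H).injective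

lemma phi_add (x y : H) : phi (x + y) = phi x + phi y := by
  simp [phi, map_add]

lemma phi_continuous : Continuous (phi (H := H)) := by
  apply WeakDual.continuous_of_continuous_eval
  intro y
  have : (fun x : H => phi x y) = fun x : H => ⟪x, y⟫ := by
    ext x; simp [phi, InnerProductSpace.toDual_apply_apply]
  rw [this]
  exact continuous_id.inner continuous_const

lemma theta_continuous : Continuous fun ℓ : WeakDual ℝ H =>
    (toWeakSpace ℝ H ((InnerProductSpace.toDual ℝ H).symm (WeakDual.toStrongDual ℓ))) := by
  apply WeakBilin.continuous_of_continuous_eval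
  intro g
  have : (fun ℓ : WeakDual ℝ H =>
      ((topDualPairing ℝ H).flip
        (toWeakSpace ℝ H ((InnerProductSpace.toDual ℝ H).symm (WeakDual.toStrongDual ℓ)))) g)
      = fun ℓ : WeakDual ℝ H => ℓ ((InnerProductSpace.toDual ℝ H).symm g) := by
    ext ℓ
    show g ((InnerProductSpace.toDual ℝ H).symm (WeakDual.toStrongDual ℓ)) = ℓ ((InnerProductSpace.toDual ℝ H).symm g)
    rw [← InnerProductSpace.toDual_symm_apply, real_inner_comm,
      InnerProductSpace.toDual_symm_apply]
    rfl
  rw [this]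
  exact WeakDual.eval_continuous _

lemma isClosed_image_phi {A : Set H} (hA : Convex ℝ A) (hAc : IsClosed A) :
    IsClosed (phi '' A : Set (WeakDual ℝ H)) := by
  have h1 : IsClosed (toWeakSpace ℝ H '' A) := by
    have h := hA.toWeakSpace_closure (𝕜 := ℝ)
    rw [hAc.closure_eq] at h
    rw [h]
    exact isClosed_closure
  have h2 : (phi '' A : Set (WeakDual ℝ H)) = (fun ℓ : WeakDual ℝ H =>
      (toWeakSpace ℝ H ((InnerProductSpace.toDual ℝ H).symm (WeakDual.toStrongDual ℓ))))
        ⁻¹' (toWeakSpace ℝ H '' A) := by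
    ext ℓ
    constructor
    · rintro ⟨x, hx, rfl⟩
      exact ⟨x, hx, by simp [phi]⟩
    · rintro ⟨x, hx, hx2⟩
      have hx3 : (InnerProductSpace.toDual ℝ H).symm (WeakDual.toStrongDual ℓ) = x :=
        (toWeakSpace ℝ H).injective hx2.symm
      refine ⟨x, hx, ?_⟩
      rw [← hx3]
      simp [phi]
  rw [h2]
  exact h1.preimage theta_continuous

lemma isCompact_image_phi {A : Set H} (hA : Convex ℝ A) (hAc : IsClosed A) {r : ℝ}
    (hAb : ∀ x ∈ A, ‖x‖ ≤ r) : IsCompact (phi '' A : Set (WeakDual ℝ H)) := by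
  refine (WeakDual.isCompact_closedBall (0 : StrongDual ℝ H) r).of_isClosed_subset
    (isClosed_image_phi hA hAc) ?_
  rintro - ⟨x, hx, rfl⟩
  simp only [Set.mem_preimage, Metric.mem_closedBall, dist_zero_right]
  show ‖(InnerProductSpace.toDual ℝ H x : StrongDual ℝ H)‖ ≤ r
  rw [(InnerProductSpace.toDual ℝ H).norm_map]
  exact hAb x hx

/-- The difference of two closed bounded convex sets in a Hilbert space is closed. -/
lemma isClosed_sub_sets {A B : Set H} (hA : Convex ℝ A) (hAc : IsClosed A) {r : ℝ}
    (hAb : ∀ x ∈ A, ‖x‖ ≤ r)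
    (hB : Convex ℝ B) (hBc : IsClosed B) {s : ℝ} (hBb : ∀ x ∈ B, ‖x‖ ≤ s) :
    IsClosed {x : H | ∃ u ∈ A, ∃ v ∈ B, x = u - v} := by
  have hKA := isCompact_image_phi hA hAc hAb
  have hKB : IsCompact (phi '' (-B) : Set (WeakDual ℝ H)) := by
    refine isCompact_image_phi hB.neg hBc.neg (r := s) ?_
    rintro x hx
    rw [Set.mem_neg] at hx
    simpa using hBb (-x) hx
  have hK : IsCompact ((phi '' A) + (phi '' (-B)) : Set (WeakDual ℝ H)) := hKA.add hKB
  have heq : {x : H | ∃ u ∈ A, ∃ v ∈ B, x = u - v}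
      = phi ⁻¹' ((phi '' A) + (phi '' (-B))) := by
    ext x
    constructor
    · rintro ⟨u, hu, v, hv, rfl⟩
      refine Set.mem_preimage.mpr (Set.mem_add.mpr ⟨phi u, ⟨u, hu, rfl⟩, phi (-v),
        ⟨-v, Set.neg_mem_neg.mpr hv, rfl⟩, ?_⟩)
      rw [← phi_add]
      congr 1
      abel
    · intro hx
      obtain ⟨a, ⟨u, hu, rfl⟩, b, ⟨w, hw, rfl⟩, hab⟩ := Set.mem_add.mp hx
      rw [Set.mem_neg] at hw
      rw [← phi_add] at hab
      have := phi_injective hab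
      exact ⟨u, hu, -w, hw, by rw [← this]; abel⟩
  rw [heq]
  exact (hK.isClosed).preimage phi_continuous

/-- `E₁` is convex whenever `E` is. -/
lemma eOne_convex {E : H → ℝ≥0∞} (hconv : IsConvexFunctional E) :
    IsConvexFunctional (EOne E) := by
  intro x y a b ha hb hab
  have hnorm : ‖a • x + b • y‖ ^ 2 ≤ a * ‖x‖ ^ 2 + b * ‖y‖ ^ 2 := by
    have h1 : ‖a • x + b • y‖ ≤ a * ‖x‖ + b * ‖y‖ := by
      refine (norm_add_le _ _).trans ?_
      rw [norm_smul, norm_smul, Real.norm_eq_abs, Real.norm_eq_abs, abs_of_nonneg ha,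
        abs_of_nonneg hb]
    have h2 : ‖a • x + b • y‖ ^ 2 ≤ (a * ‖x‖ + b * ‖y‖) ^ 2 :=
      pow_le_pow_left₀ (norm_nonneg _) h1 2
    refine h2.trans ?_
    nlinarith [sq_nonneg (‖x‖ - ‖y‖), mul_nonneg ha hb, norm_nonneg x, norm_nonneg y]
  have hN : ENNReal.ofReal (‖a • x + b • y‖ ^ 2)
      ≤ ENNReal.ofReal a * ENNReal.ofReal (‖x‖ ^ 2)
        + ENNReal.ofReal b * ENNReal.ofReal (‖y‖ ^ 2) := by
    rw [← ENNReal.ofReal_mul ha, ← ENNReal.ofReal_mul hb,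
      ← ENNReal.ofReal_add (by positivity) (by positivity)]
    exact ENNReal.ofReal_le_ofReal hnorm
  have hE := hconv x y a b ha hb hab
  calc EOne E (a • x + b • y)
      = ENNReal.ofReal (‖a • x + b • y‖ ^ 2) + E (a • x + b • y) := rfl
    _ ≤ (ENNReal.ofReal a * ENNReal.ofReal (‖x‖ ^ 2)
          + ENNReal.ofReal b * ENNReal.ofReal (‖y‖ ^ 2))
        + (ENNReal.ofReal a * E x + ENNReal.ofReal b * E y) := add_le_add hN hE
    _ = ENNReal.ofReal a * EOne E x + ENNReal.ofReal b * EOne E y := by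
        simp only [EOne]; ring

lemma eOne_lsc {E : H → ℝ≥0∞} (hlsc : LowerSemicontinuous E) :
    LowerSemicontinuous (EOne E) := by
  have h1 : Continuous fun x : H => ENNReal.ofReal (‖x‖ ^ 2) :=
    ENNReal.continuous_ofReal.comp (continuous_norm.pow 2)
  exact h1.lowerSemicontinuous.add hlsc

lemma eOne_zero {E : H → ℝ≥0∞} (hzero : E 0 = 0) : EOne E 0 = 0 := by
  simp [EOne, hzero]

variable (E : H → ℝ≥0∞)

/-- The sublevel set of `E₁`. -/
def lev (c : ℝ≥0∞) : Set H := {u : H | EOne E u ≤ c}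

/-- The decomposition functional: `F₀ x` is the least `c` such that `x = u - v` with
`E₁ u ≤ c` and `E₁ v ≤ c`. -/
def Fzero (x : H) : ℝ≥0∞ :=
  sInf {c : ℝ≥0∞ | ∃ u ∈ lev E c, ∃ v ∈ lev E c, x = u - v}

variable {E}

lemma lev_mono {c c' : ℝ≥0∞} (h : c ≤ c') : lev E c ⊆ lev E c' :=
  fun _ hu => le_trans hu h

lemma mem_lev_self (x : H) : x ∈ lev E (EOne E x) := Set.mem_setOf.mpr le_rfl

lemma lev_convex (hconv : IsConvexFunctional E) (c : ℝ≥0∞) : Convex ℝ (lev E c) := by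
  intro u hu v hv a b ha hb hab
  have := eOne_convex hconv u v a b ha hb hab
  refine this.trans ?_
  calc ENNReal.ofReal a * EOne E u + ENNReal.ofReal b * EOne E v
      ≤ ENNReal.ofReal a * c + ENNReal.ofReal b * c :=
        add_le_add (mul_le_mul_right hu _) (mul_le_mul_right hv _)
    _ = (ENNReal.ofReal a + ENNReal.ofReal b) * c := by ring
    _ = c := by rw [← ENNReal.ofReal_add ha hb, hab, ENNReal.ofReal_one, one_mul]

lemma lev_closed (hlsc : LowerSemicontinuous E) (c : ℝ≥0∞) : IsClosed (lev E c) := by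
  have : lev E c = ((EOne E) ⁻¹' (Set.Ioi c))ᶜ := by
    ext u; simp [lev, not_lt]
  rw [this]
  exact (((eOne_lsc hlsc).isOpen_preimage c)).isClosed_compl

lemma lev_bounded {c : ℝ≥0∞} (hc : c ≠ ⊤) :
    ∀ x ∈ lev E c, ‖x‖ ≤ Real.sqrt c.toReal := by
  intro x hx
  have h1 : ENNReal.ofReal (‖x‖ ^ 2) ≤ c := le_trans (le_add_right le_rfl) hx
  have h2 : ‖x‖ ^ 2 ≤ c.toReal := by
    rw [← ENNReal.ofReal_le_iff_le_toReal hc] at *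
    exact h1
  exact (Real.le_sqrt (norm_nonneg x) ENNReal.toReal_nonneg).mpr h2

/-- The set of `x = u - v` with `E₁ u, E₁ v ≤ c` is closed for finite `c`. -/
lemma isClosed_diffSet (hconv : IsConvexFunctional E) (hlsc : LowerSemicontinuous E)
    {c : ℝ≥0∞} (hc : c ≠ ⊤) :
    IsClosed {x : H | ∃ u ∈ lev E c, ∃ v ∈ lev E c, x = u - v} :=
  isClosed_sub_sets (lev_convex hconv c) (lev_closed hlsc c) (lev_bounded hc)
    (lev_convex hconv c) (lev_closed hlsc c) (lev_bounded hc)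

lemma fzero_le_of_mem {x : H} {c : ℝ≥0∞} (h : ∃ u ∈ lev E c, ∃ v ∈ lev E c, x = u - v) :
    Fzero E x ≤ c := sInf_le h

lemma fzero_lsc (hconv : IsConvexFunctional E) (hlsc : LowerSemicontinuous E) :
    LowerSemicontinuous (Fzero E) := by
  intro x t ht
  obtain ⟨c, hc1, hc2⟩ := exists_between ht
  have hcne : c ≠ ⊤ := fun h => (h ▸ hc2).not_ge le_top
  have hx : x ∉ {y : H | ∃ u ∈ lev E c, ∃ v ∈ lev E c, y = u - v} := by
    intro hmem
    exact absurd (fzero_le_of_mem hmem) (not_le.mpr hc2)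
  have hopen : IsOpen {y : H | ∃ u ∈ lev E c, ∃ v ∈ lev E c, y = u - v}ᶜ :=
    (isClosed_diffSet hconv hlsc hcne).isOpen_compl
  filter_upwards [hopen.mem_nhds hx] with y hy
  by_contra hcon
  push_neg at hcon
  have : Fzero E y < c := lt_of_le_of_lt hcon hc1
  obtain ⟨c', hc', hlt⟩ := sInf_lt_iff.mp this
  obtain ⟨u, hu, v, hv, hyeq⟩ := hc'
  exact hy ⟨u, lev_mono hlt.le hu, v, lev_mono hlt.le hv, hyeq⟩

lemma fzero_convex (hconv : IsConvexFunctional E) : IsConvexFunctional (Fzero E) := by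
  intro x y a b ha hb hab
  rcases eq_or_lt_of_le ha with ha0 | ha0
  · have hb1 : b = 1 := by linarith
    subst hb1
    rw [← ha0]
    simp
  rcases eq_or_lt_of_le hb with hb0 | hb0
  · have ha1 : a = 1 := by linarith
    subst ha1
    rw [← hb0]
    simp
  rcases eq_or_ne (Fzero E x) ⊤ with hx | hx
  · rw [hx, ENNReal.mul_top (by simpa [ENNReal.ofReal_eq_zero] using ha0.not_ge)]
    simp
  rcases eq_or_ne (Fzero E y) ⊤ with hy | hy
  · rw [hy, ENNReal.mul_top (by simpa [ENNReal.ofReal_eq_zero] using hb0.not_ge)]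
    simp
  refine ENNReal.le_of_forall_pos_le_add fun ε hε _ => ?_
  have hε2 : (0 : ℝ≥0∞) < (ε : ℝ≥0∞) / 2 := by
    simp [ENNReal.div_pos_iff, hε.ne']
  obtain ⟨c₁, hc₁, hlt₁⟩ := sInf_lt_iff.mp
    (ENNReal.lt_add_right hx hε2.ne' : Fzero E x < Fzero E x + ε / 2)
  obtain ⟨c₂, hc₂, hlt₂⟩ := sInf_lt_iff.mp
    (ENNReal.lt_add_right hy hε2.ne' : Fzero E y < Fzero E y + ε / 2)
  obtain ⟨u₁, hu₁, v₁, hv₁, hxeq⟩ := hc₁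
  obtain ⟨u₂, hu₂, v₂, hv₂, hyeq⟩ := hc₂
  set m : ℝ≥0∞ := ENNReal.ofReal a * c₁ + ENNReal.ofReal b * c₂ with hm
  have hmem : ∃ u ∈ lev E m, ∃ v ∈ lev E m, a • x + b • y = u - v := by
    refine ⟨a • u₁ + b • u₂, ?_, a • v₁ + b • v₂, ?_, ?_⟩
    · exact le_trans (eOne_convex hconv u₁ u₂ a b ha hb hab)
        (add_le_add (mul_le_mul_right hu₁ _) (mul_le_mul_right hu₂ _))
    · exact le_trans (eOne_convex hconv v₁ v₂ a b ha hb hab)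
        (add_le_add (mul_le_mul_right hv₁ _) (mul_le_mul_right hv₂ _))
    · rw [hxeq, hyeq]
      simp only [smul_sub]
      abel
  have h1 : Fzero E (a • x + b • y) ≤ m := sInf_le hmem
  refine h1.trans ?_
  have hab' : ENNReal.ofReal a + ENNReal.ofReal b = 1 := by
    rw [← ENNReal.ofReal_add ha hb, hab, ENNReal.ofReal_one]
  calc m ≤ ENNReal.ofReal a * (Fzero E x + ε / 2)
        + ENNReal.ofReal b * (Fzero E y + ε / 2) :=
        add_le_add (mul_le_mul_right hlt₁.le _) (mul_le_mul_right hlt₂.le _)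
    _ = (ENNReal.ofReal a * Fzero E x + ENNReal.ofReal b * Fzero E y)
        + (ENNReal.ofReal a + ENNReal.ofReal b) * (ε / 2) := by ring
    _ = (ENNReal.ofReal a * Fzero E x + ENNReal.ofReal b * Fzero E y) + ε / 2 := by
        rw [hab', one_mul]
    _ ≤ (ENNReal.ofReal a * Fzero E x + ENNReal.ofReal b * Fzero E y) + ε :=
        add_le_add_right (ENNReal.half_le_self) _

lemma fzero_le_eOne (hzero : E 0 = 0) (x : H) : Fzero E x ≤ EOne E x := by
  refine sInf_le ⟨x, mem_lev_self x, 0, ?_, by abel⟩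
  show EOne E 0 ≤ EOne E x
  rw [eOne_zero hzero]
  exact zero_le

lemma fzero_le_eOne_neg (hzero : E 0 = 0) (x : H) : Fzero E x ≤ EOne E (-x) := by
  refine sInf_le ⟨0, ?_, -x, mem_lev_self (-x), by abel⟩
  show EOne E 0 ≤ EOne E (-x)
  rw [eOne_zero hzero]
  exact zero_le

end SpanDomSymEAux

open SpanDomSymEAux in
/-- `span (dom E) = span (dom (sym E))`, and every `f ∈ dom (sym E)` is a difference of two
elements of `dom E`. -/
theorem span_dom_symE (E : H → ℝ≥0∞) (hconv : IsConvexFunctional E)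
    (hlsc : LowerSemicontinuous E) (hzero : E 0 = 0) :
    Submodule.span ℝ {x : H | E x < ⊤} = Submodule.span ℝ {x : H | symE E x < ⊤} ∧
    ∀ f : H, symE E f < ⊤ → ∃ u v : H, E u < ⊤ ∧ E v < ⊤ ∧ f = u - v := by
  have key : ∀ f : H, symE E f < ⊤ → ∃ u v : H, E u < ⊤ ∧ E v < ⊤ ∧ f = u - v := by
    intro f hf
    have hle : Fzero E f ≤ symE E f := by
      refine le_sSup ?_
      exact ⟨Fzero E, fzero_lsc hconv hlsc, fzero_convex hconv,
        fzero_le_eOne hzero, fzero_le_eOne_neg hzero, rfl⟩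
    have hlt : Fzero E f < ⊤ := lt_of_le_of_lt hle hf
    obtain ⟨c, hc, hclt⟩ := sInf_lt_iff.mp hlt
    obtain ⟨u, hu, v, hv, rfl⟩ := hc
    refine ⟨u, v, ?_, ?_, rfl⟩
    · exact lt_of_le_of_lt (le_trans (le_add_left le_rfl) hu) hclt
    · exact lt_of_le_of_lt (le_trans (le_add_left le_rfl) hv) hclt
  constructor
  · apply le_antisymm
    · refine Submodule.span_mono fun x hx => ?_
      have h1 : symE E x ≤ EOne E x := by
        refine sSup_le ?_
        rintro t ⟨F, _, _, hF1, _, rfl⟩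
        exact hF1 x
      have h2 : EOne E x < ⊤ := by
        rw [EOne]
        exact ENNReal.add_lt_top.mpr ⟨ENNReal.ofReal_lt_top, hx⟩
      exact lt_of_le_of_lt h1 h2
    · rw [Submodule.span_le]
      intro x hx
      obtain ⟨u, v, hu, hv, rfl⟩ := key x hx
      exact sub_mem (Submodule.subset_span hu) (Submodule.subset_span hv)
  · exact key

end
end
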